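/- arXiv:1308.1359 — 10 statements merged into one kernel-verified Lean document; each statement's English description precedes it below -/
import Mathlib

section
/- Let Z be a square-integrable centred random field on an index set D with covariance kernel k, and let T = Σ_{i=1}^q α_i T_{v_i} be a finite linear combination of composition operators with symbols v_i : D → D and weights α_i ∈ ℝ. Then Z equals T(Z) up to a modification (i.e., for every x ∈ D, P(Z_x = Σ_i α_i Z_{v_i(x)}) = 1) if and only if k is T-invariant in its first argument, i.e., for all x, x' ∈ D, Σ_i α_i k(v_i(x), x') = k(x, x'). -/
open MeasureTheory

theorem invariance_under_combination_of_composition_operators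
    {Ω D : Type*} [MeasurableSpace Ω] (μ : Measure Ω) [IsProbabilityMeasure μ]
    (Z : D → Ω → ℝ) (hL2 : ∀ x, MemLp (Z x) 2 μ)
    (hcent : ∀ x, ∫ ω, Z x ω ∂μ = 0)
    (k : D → D → ℝ) (hk : ∀ x x', k x x' = ∫ ω, Z x ω * Z x' ω ∂μ)
    (q : ℕ) (α : Fin q → ℝ) (v : Fin q → D → D) :
    (∀ x, ∀ᵐ ω ∂μ, Z x ω = ∑ i, α i * Z (v i x) ω) ↔
      (∀ x x', ∑ i, α i * k (v i x) x' = k x x') := by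
  have hprod : ∀ (f g : Ω → ℝ), MemLp f 2 μ → MemLp g 2 μ →
      Integrable (fun ω => f ω * g ω) μ := by
    intro f g hf hg
    have h1 : MemLp (f • g) 1 μ := hg.smul hf
    have := memLp_one_iff_integrable.mp h1
    simpa [Pi.smul_apply, smul_eq_mul, Pi.mul_def] using this
  have hmul : ∀ a b : D, Integrable (fun ω => Z a ω * Z b ω) μ := fun a b =>
    hprod _ _ (hL2 a) (hL2 b)
  constructor
  · intro h x x'
    rw [hk x x']
    have h1 : ∫ ω, Z x ω * Z x' ω ∂μ = ∫ ω, (∑ i, α i * Z (v i x) ω) * Z x' ω ∂μ := by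
      refine integral_congr_ae ((h x).mono fun ω hω => ?_)
      dsimp only
      rw [hω]
    rw [h1]
    have h2 : ∀ ω, (∑ i, α i * Z (v i x) ω) * Z x' ω
        = ∑ i, α i * (Z (v i x) ω * Z x' ω) := by
      intro ω; rw [Finset.sum_mul]; congr 1; ext i; ring
    simp_rw [h2]
    rw [integral_finset_sum]
    · congr 1; ext i
      rw [integral_const_mul, hk]
    · intro i _; exact (hmul (v i x) x').const_mul _
  · intro h x
    set S : Ω → ℝ := fun ω => ∑ i, α i * Z (v i x) ω with hSdef
    have hS : MemLp S 2 μ := by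
      exact memLp_finset_sum _ fun i _ => (hL2 (v i x)).const_mul (α i)
    set Y : Ω → ℝ := fun ω => Z x ω - S ω with hYdef
    have hY : MemLp Y 2 μ := (hL2 x).sub hS
    have hYZ : ∀ b : D, Integrable (fun ω => Y ω * Z b ω) μ := fun b =>
      hprod _ _ hY (hL2 b)
    -- ∫ S * Z b = ∑ α i k (v i x) b
    have hSZ : ∀ b : D, ∫ ω, S ω * Z b ω ∂μ = ∑ i, α i * k (v i x) b := by
      intro b
      have h2 : ∀ ω, S ω * Z b ω = ∑ i, α i * (Z (v i x) ω * Z b ω) := by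
        intro ω; rw [hSdef]; rw [Finset.sum_mul]; congr 1; ext i; ring
      simp_rw [h2]
      rw [integral_finset_sum]
      · congr 1; ext i; rw [integral_const_mul, hk]
      · intro i _; exact (hmul (v i x) b).const_mul _
    have hSint : ∀ b : D, Integrable (fun ω => S ω * Z b ω) μ := fun b =>
      hprod _ _ hS (hL2 b)
    -- ∫ Y * Z b = 0 for all b
    have hYorth : ∀ b : D, ∫ ω, Y ω * Z b ω ∂μ = 0 := by
      intro b
      have : ∀ ω, Y ω * Z b ω = Z x ω * Z b ω - S ω * Z b ω := by
        intro ω; rw [hYdef]; ring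
      simp_rw [this]
      rw [integral_sub (hmul x b) (hSint b), hSZ, ← hk, h x b, sub_self]
    -- ∫ Y * Y = 0
    have hYsq : ∫ ω, Y ω * Y ω ∂μ = 0 := by
      have hexp : ∀ ω, Y ω * Y ω = Y ω * Z x ω - ∑ i, α i * (Y ω * Z (v i x) ω) := by
        intro ω
        have : Y ω * S ω = ∑ i, α i * (Y ω * Z (v i x) ω) := by
          rw [hSdef, Finset.mul_sum]; congr 1; ext i; ring
        calc Y ω * Y ω = Y ω * Z x ω - Y ω * S ω := by rw [hYdef]; ring
          _ = _ := by rw [this]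
      simp_rw [hexp]
      rw [integral_sub (hYZ x)]
      · rw [integral_finset_sum]
        · have : ∀ i ∈ Finset.univ, ∫ ω, α i * (Y ω * Z (v i x) ω) ∂μ = 0 := by
            intro i _; rw [integral_const_mul, hYorth, mul_zero]
          rw [Finset.sum_congr rfl this, Finset.sum_const, smul_zero, hYorth, sub_zero]
        · intro i _; exact (hYZ (v i x)).const_mul _
      · apply integrable_finset_sum
        intro i _; exact (hYZ (v i x)).const_mul _
    have hYY : Integrable (fun ω => Y ω * Y ω) μ := hprod _ _ hY hY
    have hzero : (fun ω => Y ω * Y ω) =ᵐ[μ] 0 := by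
      rw [← integral_eq_zero_iff_of_nonneg (fun ω => mul_self_nonneg (Y ω)) hYY]
      exact hYsq
    filter_upwards [hzero] with ω hω
    have : Y ω = 0 := by
      have hω' : Y ω * Y ω = 0 := hω
      exact mul_self_eq_zero.mp hω'
    have := sub_eq_zero.mp this
    simpa [hSdef] using this
end

section
/- Direction (⇐) of the invariance criterion: if Z is a square-integrable centred random field with covariance k and T = Σ_{i=1}^q α_i T_{v_i} is a combination of composition operators such that Σ_i α_i k(v_i(x), x') = k(x, x') for all x, x' ∈ D, then for every x ∈ D, Var(Z_x − Σ_i α_i Z_{v_i(x)}) = 0 and hence Z_x = Σ_i α_i Z_{v_i(x)} almost surely. -/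
open MeasureTheory

theorem invariance_criterion_sufficiency
    {Ω D : Type*} [MeasurableSpace Ω] (μ : Measure Ω) [IsProbabilityMeasure μ]
    (Z : D → Ω → ℝ) (hL2 : ∀ x, MemLp (Z x) 2 μ)
    (hcent : ∀ x, ∫ ω, Z x ω ∂μ = 0)
    (k : D → D → ℝ) (hk : ∀ x x', k x x' = ∫ ω, Z x ω * Z x' ω ∂μ)
    (q : ℕ) (α : Fin q → ℝ) (v : Fin q → D → D)
    (hinv : ∀ x x', ∑ i, α i * k (v i x) x' = k x x') :
    ∀ x, (∫ ω, (Z x ω - ∑ i, α i * Z (v i x) ω) ^ 2 ∂μ = 0) ∧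
      (∀ᵐ ω ∂μ, Z x ω = ∑ i, α i * Z (v i x) ω) := by
  intro x
  -- product of two L² functions is integrable
  have hmul0 : ∀ f g : Ω → ℝ, MemLp f 2 μ → MemLp g 2 μ →
      Integrable (fun ω => f ω * g ω) μ := by
    intro f g hf hg
    have heq : (fun ω => f ω * g ω)
        = fun ω => ((f ω + g ω) ^ 2 - f ω ^ 2 - g ω ^ 2) / 2 := by
      funext ω; ring
    rw [heq]
    have h1 : Integrable (fun ω => (f ω + g ω) ^ 2 - f ω ^ 2 - g ω ^ 2) μ := by
      exact ((hf.add hg).integrable_sq.sub hf.integrable_sq).sub hg.integrable_sq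
    exact h1.div_const 2
  -- symmetry of k
  have ksymm : ∀ a b, k a b = k b a := by
    intro a b
    rw [hk, hk]
    exact integral_congr_ae (Filter.Eventually.of_forall fun ω => mul_comm _ _)
  set B : Ω → ℝ := fun ω => ∑ i, α i * Z (v i x) ω with hBdef
  have hBL2 : MemLp B 2 μ :=
    memLp_finset_sum _ fun i _ => (hL2 (v i x)).const_mul (α i)
  have hmul : ∀ a b : D, Integrable (fun ω => Z a ω * Z b ω) μ := fun a b =>
    hmul0 _ _ (hL2 a) (hL2 b)
  -- ∫ Z y * B = k x y
  have hZB : ∀ y, ∫ ω, Z y ω * B ω ∂μ = k x y := by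
    intro y
    have : (fun ω => Z y ω * B ω) = fun ω => ∑ i, α i * (Z (v i x) ω * Z y ω) := by
      funext ω
      simp only [hBdef, Finset.mul_sum]
      exact Finset.sum_congr rfl fun i _ => by ring
    rw [this, integral_finset_sum _ (fun i _ => ((hmul (v i x) y).const_mul (α i)))]
    calc ∑ i, ∫ ω, α i * (Z (v i x) ω * Z y ω) ∂μ
        = ∑ i, α i * k (v i x) y := by
          refine Finset.sum_congr rfl fun i _ => ?_
          rw [integral_const_mul, ← hk]
      _ = k x y := hinv x y
  have hZBi : ∀ y, Integrable (fun ω => Z y ω * B ω) μ := fun y =>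
    hmul0 _ _ (hL2 y) hBL2
  have hBB : ∫ ω, B ω * B ω ∂μ = k x x := by
    have : (fun ω => B ω * B ω) = fun ω => ∑ i, α i * (Z (v i x) ω * B ω) := by
      funext ω
      simp only [hBdef, Finset.sum_mul]
      exact Finset.sum_congr rfl fun i _ => by ring
    rw [this, integral_finset_sum _ (fun i _ => ((hZBi (v i x)).const_mul (α i)))]
    calc ∑ i, ∫ ω, α i * (Z (v i x) ω * B ω) ∂μ
        = ∑ i, α i * k (v i x) x := by
          refine Finset.sum_congr rfl fun i _ => ?_
          rw [integral_const_mul, hZB, ksymm]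
      _ = k x x := hinv x x
  have hBBi : Integrable (fun ω => B ω * B ω) μ := hmul0 _ _ hBL2 hBL2
  have hAB : ∫ ω, Z x ω * B ω ∂μ = k x x := hZB x
  have hAA : ∫ ω, Z x ω * Z x ω ∂μ = k x x := (hk x x).symm
  -- expand the square
  have hexp : (fun ω => (Z x ω - B ω) ^ 2)
      = fun ω => (Z x ω * Z x ω - 2 * (Z x ω * B ω)) + B ω * B ω := by
    funext ω; ring
  have h1i : Integrable (fun ω => Z x ω * Z x ω - 2 * (Z x ω * B ω)) μ := by
    exact (hmul x x).sub ((hZBi x).const_mul 2)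
  have hzero : ∫ ω, (Z x ω - B ω) ^ 2 ∂μ = 0 := by
    rw [hexp, integral_add h1i hBBi,
      integral_sub (hmul x x) ((hZBi x).const_mul 2), integral_const_mul,
      hAA, hAB, hBB]
    ring
  refine ⟨hzero, ?_⟩
  have hsqint : Integrable (fun ω => (Z x ω - B ω) ^ 2) μ := by
    rw [hexp]; exact h1i.add hBBi
  have hae : ∀ᵐ ω ∂μ, (Z x ω - B ω) ^ 2 = 0 := by
    have h := (integral_eq_zero_iff_of_nonneg
      (fun ω => sq_nonneg (Z x ω - B ω)) hsqint).mp hzero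
    filter_upwards [h] with ω hω
    simpa using hω
  filter_upwards [hae] with ω hω
  have := pow_eq_zero_iff (n := 2) (by norm_num) |>.mp hω
  linarith [this]
end

section
/- Let G be a finite group acting on D. A centred square-integrable random field Z with covariance kernel k has paths invariant under the group action up to a modification (for every g ∈ G and x ∈ D, P(Z_{g·x} = Z_x) = 1) if and only if k is argumentwise invariant: k(g·x, x') = k(x, x') for all g ∈ G and x, x' ∈ D. -/
open MeasureTheory

theorem group_invariance_of_paths_iff_argumentwise_invariant_kernel
    {Ω D G : Type*} [MeasurableSpace Ω] (μ : Measure Ω) [IsProbabilityMeasure μ]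
    [Group G] [Finite G] [MulAction G D]
    (Z : D → Ω → ℝ) (hL2 : ∀ x, MemLp (Z x) 2 μ)
    (hcent : ∀ x, ∫ ω, Z x ω ∂μ = 0)
    (k : D → D → ℝ) (hk : ∀ x x', k x x' = ∫ ω, Z x ω * Z x' ω ∂μ) :
    (∀ (g : G) (x : D), ∀ᵐ ω ∂μ, Z (g • x) ω = Z x ω) ↔
      (∀ (g : G) (x x' : D), k (g • x) x' = k x x') := by
  have hint : ∀ x x', Integrable (fun ω => Z x ω * Z x' ω) μ := by
    intro a b
    have h := L2.integrable_inner (𝕜 := ℝ) ((hL2 a).toLp _) ((hL2 b).toLp _)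
    refine h.congr ?_
    filter_upwards [(hL2 a).coeFn_toLp, (hL2 b).coeFn_toLp] with ω h1 h2
    simp [RCLike.inner_apply, h1, h2, mul_comm]
  constructor
  · intro h g x x'
    rw [hk, hk]
    refine integral_congr_ae ?_
    filter_upwards [h g x] with ω hω
    rw [hω]
  · intro h g x
    -- E[(Z(g•x) - Z x)^2] = 0
    have hsym : ∀ x x', k x x' = k x' x := by
      intro a b; rw [hk, hk]; congr 1; ext ω; ring
    have h1 : k (g • x) (g • x) = k x x := by
      rw [h g x (g • x), hsym x (g • x), h g x x]
    have h2 : k (g • x) x = k x x := h g x x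
    have hmem : MemLp (fun ω => Z (g • x) ω - Z x ω) 2 μ := (hL2 _).sub (hL2 _)
    have hintsq : Integrable (fun ω => (Z (g • x) ω - Z x ω) ^ 2) μ := by
      have h := L2.integrable_inner (𝕜 := ℝ) (hmem.toLp _) (hmem.toLp _)
      refine h.congr ?_
      filter_upwards [hmem.coeFn_toLp] with ω h1
      simp [RCLike.inner_apply, h1, pow_two]
    have hzero : ∫ ω, (Z (g • x) ω - Z x ω) ^ 2 ∂μ = 0 := by
      have expand : ∀ ω, (Z (g • x) ω - Z x ω) ^ 2 =
          Z (g • x) ω * Z (g • x) ω - 2 * (Z (g • x) ω * Z x ω)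
            + Z x ω * Z x ω := by intro ω; ring
      have hA := hint (g • x) (g • x)
      have hB : Integrable (fun ω => 2 * (Z (g • x) ω * Z x ω)) μ :=
        (hint (g • x) x).const_mul 2
      have hC := hint x x
      have hAB : Integrable
          (fun ω => Z (g • x) ω * Z (g • x) ω - 2 * (Z (g • x) ω * Z x ω)) μ := hA.sub hB
      rw [integral_congr_ae (Filter.Eventually.of_forall expand),
        integral_add hAB hC, integral_sub hA hB, integral_const_mul]
      have e1 : ∫ ω, Z (g • x) ω * Z (g • x) ω ∂μ = k x x := by rw [← hk]; exact h1
      have e2 : ∫ ω, Z (g • x) ω * Z x ω ∂μ = k x x := by rw [← hk]; exact h2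
      have e3 : ∫ ω, Z x ω * Z x ω ∂μ = k x x := (hk x x).symm
      rw [e1, e2, e3]; ring
    have := (integral_eq_zero_iff_of_nonneg
      (fun ω => sq_nonneg (Z (g • x) ω - Z x ω)) hintsq).mp hzero
    filter_upwards [this] with ω hω
    have : (Z (g • x) ω - Z x ω) ^ 2 = 0 := hω
    have := pow_eq_zero_iff (n := 2) (by norm_num) |>.mp this
    linarith
end

section
/- A centred square-integrable random field Z on D = Π_{i=1}^d D_i with covariance kernel k has additive paths up to a modification if and only if k can be written as k(x, x') = Σ_{i=1}^d Σ_{j=1}^d k_{ij}(x_i, x'_j) for some functions k_{ij} : D_i × D_j → ℝ. -/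
open MeasureTheory

section Aux

variable {Ω : Type*} [MeasurableSpace Ω] {μ : Measure Ω}

private lemma aux_integrable_mul {f g : Ω → ℝ} (hf : MemLp f 2 μ) (hg : MemLp g 2 μ) :
    Integrable (fun ω => f ω * g ω) μ := by
  have h : (1 : ENNReal) / 1 = 1 / 2 + 1 / 2 := by
    rw [ENNReal.div_add_div_same, one_div_one]
    norm_num
    exact (ENNReal.div_self (by norm_num) (by norm_num)).symm
  have hsmul : MemLp (f • g) 1 μ := MemLp.smul (r := 1) hg hf
  rw [memLp_one_iff_integrable] at hsmul
  exact hsmul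

private lemma aux_sum_update {d : ℕ} {D : Fin d → Type*} (c : ∀ i, D i) (l : Fin d) (v : D l)
    (F : ∀ j, D j → ℝ) :
    ∑ j, F j (Function.update c l v j) = (∑ j, F j (c j)) + (F l v - F l (c l)) := by
  classical
  have h : ∑ j, (F j (Function.update c l v j) - F j (c j)) = F l v - F l (c l) := by
    rw [Finset.sum_eq_single l]
    · rw [Function.update_self]
    · intro j _ hj
      rw [Function.update_of_ne hj]
      ring
    · intro h; exact absurd (Finset.mem_univ l) h
  rw [Finset.sum_sub_distrib] at h
  linarith

private lemma aux_integral_sum_mul_sum {ι₁ ι₂ : Type*} [Fintype ι₁] [Fintype ι₂]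
    (f : ι₁ → Ω → ℝ) (g : ι₂ → Ω → ℝ) (a : ι₁ → ℝ) (b : ι₂ → ℝ)
    (hf : ∀ i, MemLp (f i) 2 μ) (hg : ∀ j, MemLp (g j) 2 μ) :
    ∫ ω, (∑ i, a i * f i ω) * (∑ j, b j * g j ω) ∂μ
      = ∑ i, ∑ j, a i * b j * ∫ ω, f i ω * g j ω ∂μ := by
  have h1 : ∀ ω, (∑ i, a i * f i ω) * (∑ j, b j * g j ω)
      = ∑ i, ∑ j, a i * b j * (f i ω * g j ω) := by
    intro ω
    rw [Finset.sum_mul_sum]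
    exact Finset.sum_congr rfl fun i _ => Finset.sum_congr rfl fun j _ => by ring
  simp_rw [h1]
  rw [integral_finset_sum _ (fun i _ =>
    integrable_finset_sum _ (fun j _ => ((aux_integrable_mul (hf i) (hg j)).const_mul _)))]
  refine Finset.sum_congr rfl fun i _ => ?_
  rw [integral_finset_sum _ (fun j _ => ((aux_integrable_mul (hf i) (hg j)).const_mul _))]
  exact Finset.sum_congr rfl fun j _ => integral_const_mul _ _

end Aux

theorem additive_paths_iff_double_sum_kernel
    {Ω : Type*} [MeasurableSpace Ω] (μ : Measure Ω) [IsProbabilityMeasure μ]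
    {d : ℕ} {D : Fin d → Type*} [∀ i, Nonempty (D i)]
    (Z : (∀ i, D i) → Ω → ℝ) (hL2 : ∀ x, MemLp (Z x) 2 μ)
    (hcent : ∀ x, ∫ ω, Z x ω ∂μ = 0)
    (k : (∀ i, D i) → (∀ i, D i) → ℝ)
    (hk : ∀ x x', k x x' = ∫ ω, Z x ω * Z x' ω ∂μ) :
    (∃ A : (∀ i, D i) → Ω → ℝ,
        (∀ ω, ∃ g : ∀ i, D i → ℝ, ∀ x, A x ω = ∑ i, g i (x i)) ∧
        (∀ x, ∀ᵐ ω ∂μ, Z x ω = A x ω)) ↔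
      (∃ κ : ∀ i j, D i → D j → ℝ, ∀ x x', k x x' = ∑ i, ∑ j, κ i j (x i) (x' j)) := by
  classical
  have c : ∀ i, D i := fun i => Classical.arbitrary (D i)
  constructor
  · -- forward direction
    rintro ⟨A, hadd, hmod⟩
    have hA2 : ∀ x, MemLp (A x) 2 μ := fun x => (hL2 x).ae_eq (hmod x)
    set r : ℝ := ((d : ℝ) - 1) / d with hr
    set B : ∀ i, D i → Ω → ℝ :=
      fun i s ω => A (Function.update c i s) ω - r * A c ω with hB
    have hB2 : ∀ i s, MemLp (B i s) 2 μ := fun i s =>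
      (hA2 _).sub ((hA2 c).const_mul r)
    have hrep : ∀ x ω, A x ω = ∑ i, B i (x i) ω := by
      intro x ω
      obtain ⟨g, hg⟩ := hadd ω
      by_cases hd : d = 0
      · subst hd
        simp [hg]
      · have hd' : (d : ℝ) ≠ 0 := Nat.cast_ne_zero.mpr hd
        have hstep : ∀ i, B i (x i) ω
            = g i (x i) - g i (c i) + (1 - r) * (∑ j, g j (c j)) := by
          intro i
          have h1 : A (Function.update c i (x i)) ω
              = (∑ j, g j (c j)) + (g i (x i) - g i (c i)) := by
            rw [hg]
            exact aux_sum_update c i (x i) g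
          simp only [hB]
          rw [h1, hg c]
          ring
        have hone : (d : ℝ) * (1 - r) = 1 := by
          rw [hr]
          field_simp
          ring
        calc A x ω = ∑ i, g i (x i) := hg x
          _ = ∑ i, B i (x i) ω := by
              rw [Finset.sum_congr rfl fun i _ => hstep i, Finset.sum_add_distrib,
                Finset.sum_sub_distrib, Finset.sum_const, Finset.card_univ, Fintype.card_fin,
                nsmul_eq_mul, ← mul_assoc, hone, one_mul]
              ring
    refine ⟨fun i j s t => ∫ ω, B i s ω * B j t ω ∂μ, fun x x' => ?_⟩
    calc k x x' = ∫ ω, Z x ω * Z x' ω ∂μ := hk x x'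
      _ = ∫ ω, (∑ i, (1:ℝ) * B i (x i) ω) * (∑ j, (1:ℝ) * B j (x' j) ω) ∂μ := by
          refine integral_congr_ae ?_
          filter_upwards [hmod x, hmod x'] with ω h1 h2
          simp only [one_mul]
          rw [h1, h2, hrep x ω, hrep x' ω]
      _ = ∑ i, ∑ j, (1:ℝ) * (1:ℝ) * ∫ ω, B i (x i) ω * B j (x' j) ω ∂μ :=
          aux_integral_sum_mul_sum _ _ _ _ (fun i => hB2 i (x i)) (fun j => hB2 j (x' j))
      _ = ∑ i, ∑ j, ∫ ω, B i (x i) ω * B j (x' j) ω ∂μ := by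
          simp only [one_mul]
  · -- reverse direction
    rintro ⟨κ, hκ⟩
    refine ⟨fun x ω => ∑ i, (Z (Function.update c i (x i)) ω - ((d:ℝ)-1)/(d:ℝ) * Z c ω),
      fun ω => ⟨fun i t => Z (Function.update c i t) ω - ((d:ℝ)-1)/(d:ℝ) * Z c ω,
        fun x => rfl⟩, ?_⟩
    intro x
    by_cases hd : d = 0
    · subst hd
      have hempty : k x x = 0 := by
        rw [hκ]
        simp
      have h0 : ∫ ω, Z x ω * Z x ω ∂μ = 0 := by
        rw [← hk, hempty]
      have hz := (integral_eq_zero_iff_of_nonneg (fun ω => mul_self_nonneg (Z x ω))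
        (aux_integrable_mul (hL2 x) (hL2 x))).mp h0
      filter_upwards [hz] with ω hω
      have : Z x ω = 0 := mul_self_eq_zero.mp hω
      simp [this]
    · have hd' : (d : ℝ) ≠ 0 := Nat.cast_ne_zero.mpr hd
      set e : Fin d → ∀ i, D i := fun i => Function.update c i (x i) with he
      set r : ℝ := (d : ℝ) - 1 with hr
      -- the candidate additive field in a simpler form
      have hA : ∀ ω, (∑ i, (Z (Function.update c i (x i)) ω - ((d:ℝ)-1)/(d:ℝ) * Z c ω))
          = (∑ i, Z (e i) ω) - r * Z c ω := by
        intro ω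
        have hdr : (d : ℝ) * (((d:ℝ)-1) / (d:ℝ)) = r := by
          rw [hr]; field_simp
        rw [Finset.sum_sub_distrib, Finset.sum_const, Finset.card_univ, Fintype.card_fin,
          nsmul_eq_mul, ← mul_assoc, hdr]
      -- the kernel identity
      have I1 : ∀ y, ∑ l, k y (e l) = k y x + r * k y c := by
        intro y
        have hstep : ∀ l, k y (e l)
            = k y c + ((∑ i, κ i l (y i) (x l)) - (∑ i, κ i l (y i) (c l))) := by
          intro l
          rw [hκ y (e l), hκ y c]
          have hinner : ∀ i, (∑ j, κ i j (y i) (e l j))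
              = (∑ j, κ i j (y i) (c j)) + (κ i l (y i) (x l) - κ i l (y i) (c l)) := by
            intro i
            simp only [he]
            exact aux_sum_update c l (x l) (fun j => κ i j (y i))
          rw [Finset.sum_congr rfl fun i _ => hinner i, Finset.sum_add_distrib,
            Finset.sum_sub_distrib]
        have hyx : ∑ l, ∑ i, κ i l (y i) (x l) = k y x := by
          rw [hκ y x]; exact Finset.sum_comm
        have hyc : ∑ l, ∑ i, κ i l (y i) (c l) = k y c := by
          rw [hκ y c]; exact Finset.sum_comm
        rw [Finset.sum_congr rfl fun l _ => hstep l, Finset.sum_add_distrib,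
          Finset.sum_const, Finset.card_univ, Fintype.card_fin, nsmul_eq_mul,
          Finset.sum_sub_distrib, hyx, hyc, hr]
        ring
      -- index the points appearing in the candidate field
      set pt : Option (Option (Fin d)) → ∀ i, D i :=
        fun o => o.elim x (fun o' => o'.elim c e) with hpt
      set a : Option (Option (Fin d)) → ℝ :=
        fun o => o.elim 1 (fun o' => o'.elim r (fun _ => -1)) with ha
      set W : Ω → ℝ := fun ω => ∑ o, a o * Z (pt o) ω with hWdef
      have hWe : ∀ ω, W ω = Z x ω - ((∑ i, Z (e i) ω) - r * Z c ω) := by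
        intro ω
        simp only [hWdef, ha, hpt, Fintype.sum_option, Option.elim_none, Option.elim_some,
          one_mul, neg_one_mul]
        rw [Finset.sum_neg_distrib]
        ring
      have hW2 : MemLp W 2 μ := by
        rw [hWdef]
        exact memLp_finset_sum _ (fun o _ => (hL2 (pt o)).const_mul (a o))
      -- E[Z_y * W] = 0 for every y, expressed via k
      have E1 : ∀ y, ∑ o, a o * k y (pt o) = 0 := by
        intro y
        simp only [ha, hpt, Fintype.sum_option, Option.elim_none, Option.elim_some,
          one_mul, neg_one_mul]
        rw [Finset.sum_neg_distrib, I1 y]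
        ring
      have hzero : ∫ ω, W ω * W ω ∂μ = 0 := by
        have hcalc : ∫ ω, W ω * W ω ∂μ
            = ∑ o, ∑ o', a o * a o' * ∫ ω, Z (pt o) ω * Z (pt o') ω ∂μ := by
          rw [hWdef]
          exact aux_integral_sum_mul_sum _ _ _ _ (fun o => hL2 (pt o)) (fun o => hL2 (pt o))
        rw [hcalc]
        have : ∀ o, ∑ o', a o * a o' * ∫ ω, Z (pt o) ω * Z (pt o') ω ∂μ
            = a o * ∑ o', a o' * k (pt o) (pt o') := by
          intro o
          rw [Finset.mul_sum]
          refine Finset.sum_congr rfl fun o' _ => ?_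
          rw [← hk, mul_assoc]
        rw [Finset.sum_congr rfl fun o _ => this o]
        simp only [E1, mul_zero, Finset.sum_const_zero]
      have hz := (integral_eq_zero_iff_of_nonneg (fun ω => mul_self_nonneg (W ω))
        (aux_integrable_mul hW2 hW2)).mp hzero
      filter_upwards [hz] with ω hω
      have hW0 : W ω = 0 := mul_self_eq_zero.mp hω
      have := hWe ω
      rw [hA ω]
      rw [hW0] at this
      linarith
end

section
/- Let H be the RKHS of a kernel k on D and Z a centred Gaussian field with covariance k. Suppose T acts on the paths of Z with T(Z)_x ∈ L(Z) := closure of span{Z_x : x ∈ D} in L² for every x ∈ D. Then there exists a unique linear operator 𝒯 : H → ℝ^D satisfying cov(T(Z)_x, Z_{x'}) = 𝒯(k(·, x'))(x) for all x, x' ∈ D and such that 𝒯(h_n)(x) → 𝒯(h)(x) pointwise whenever h_n → h in H; it is given by 𝒯(h)(x) = cov(T(Z)_x, Ψ(h)), where Ψ : H → L(Z) is the Loève isometry. -/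
open MeasureTheory Filter
open scoped RealInnerProductSpace

theorem induced_operator_on_RKHS_exists_unique
    {Ω D : Type*} [MeasurableSpace Ω] {μ : Measure Ω} [IsProbabilityMeasure μ]
    {H : Type*} [NormedAddCommGroup H] [InnerProductSpace ℝ H] [CompleteSpace H]
    (k : D → D → ℝ) (φ : D → H) (hφ : ∀ x x', ⟪φ x, φ x'⟫ = k x x')
    (hdense : Dense (Submodule.span ℝ (Set.range φ) : Set H))
    (Z TZ : D → Lp ℝ 2 μ)
    (hk : ∀ x x', k x x' = ⟪Z x, Z x'⟫)
    (hTZ : ∀ x, TZ x ∈ closure (Submodule.span ℝ (Set.range Z) : Set (Lp ℝ 2 μ)))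
    (Ψ : H →ₗᵢ[ℝ] Lp ℝ 2 μ) (hΨ : ∀ x, Ψ (φ x) = Z x) :
    (∃! 𝒯 : H →ₗ[ℝ] (D → ℝ),
        (∀ x x', ⟪TZ x, Z x'⟫ = 𝒯 (φ x') x) ∧
        (∀ (h : ℕ → H) (h₀ : H), Tendsto h atTop (nhds h₀) →
          ∀ x, Tendsto (fun n => 𝒯 (h n) x) atTop (nhds (𝒯 h₀ x)))) ∧
    (∀ 𝒯 : H →ₗ[ℝ] (D → ℝ),
        ((∀ x x', ⟪TZ x, Z x'⟫ = 𝒯 (φ x') x) ∧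
         (∀ (h : ℕ → H) (h₀ : H), Tendsto h atTop (nhds h₀) →
          ∀ x, Tendsto (fun n => 𝒯 (h n) x) atTop (nhds (𝒯 h₀ x)))) →
        ∀ (h : H) (x : D), 𝒯 h x = ⟪TZ x, Ψ h⟫) := by
  set T : H →ₗ[ℝ] (D → ℝ) :=
    { toFun := fun h x => ⟪TZ x, Ψ h⟫
      map_add' := by
        intro a b; funext x; simp [inner_add_right]
      map_smul' := by
        intro c a; funext x; simp [real_inner_smul_right] } with hT
  have hTprop : (∀ x x', ⟪TZ x, Z x'⟫ = T (φ x') x) ∧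
      (∀ (h : ℕ → H) (h₀ : H), Tendsto h atTop (nhds h₀) →
        ∀ x, Tendsto (fun n => T (h n) x) atTop (nhds (T h₀ x))) := by
    constructor
    · intro x x'; simp [hT, hΨ]
    · intro h h₀ hh x
      exact Tendsto.inner tendsto_const_nhds ((Ψ.continuous.tendsto h₀).comp hh)
  -- key uniqueness lemma
  have key : ∀ 𝒯 : H →ₗ[ℝ] (D → ℝ),
      ((∀ x x', ⟪TZ x, Z x'⟫ = 𝒯 (φ x') x) ∧
       (∀ (h : ℕ → H) (h₀ : H), Tendsto h atTop (nhds h₀) →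
        ∀ x, Tendsto (fun n => 𝒯 (h n) x) atTop (nhds (𝒯 h₀ x)))) →
      ∀ (h : H) (x : D), 𝒯 h x = ⟪TZ x, Ψ h⟫ := by
    intro 𝒯 ⟨hcov, hcont⟩ h x
    have hspan : ∀ g ∈ Submodule.span ℝ (Set.range φ), 𝒯 g x = T g x := by
      intro g hg
      induction hg using Submodule.span_induction with
      | mem g hg =>
        obtain ⟨x', rfl⟩ := hg
        rw [← hcov x x']
        simp [hT, hΨ]
      | zero => simp
      | add a b _ _ ha hb => simp [ha, hb]
      | smul c a _ ha => simp [ha]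
    -- approximate h by a sequence in the span
    have hcl : h ∈ closure (Submodule.span ℝ (Set.range φ) : Set H) := hdense h
    obtain ⟨u, hu_mem, hu_lim⟩ := mem_closure_iff_seq_limit.mp hcl
    have h1 := hcont u h hu_lim x
    have h2 := hTprop.2 u h hu_lim x
    have heq : (fun n => 𝒯 (u n) x) = fun n => T (u n) x := by
      funext n; exact hspan _ (hu_mem n)
    rw [heq] at h1
    exact tendsto_nhds_unique h1 h2
  refine ⟨⟨T, hTprop, fun 𝒯 h𝒯 => ?_⟩, key⟩
  ext h x
  simpa [hT] using key 𝒯 h𝒯 h x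
end

section
/- Under the hypotheses of the Loève-isometry construction (Z centred Gaussian with continuous kernel k on compact D, T linear with T(Z)_x ∈ L(Z) for all x, and 𝒯 the induced operator on the RKHS H), the following are equivalent: (i) Z = T(Z) up to a modification; (ii) 𝒯(k(·, x')) = k(·, x') for all x' ∈ D; (iii) 𝒯 is the identity on H. -/
open MeasureTheory
open scoped RealInnerProductSpace

theorem invariance_equivalences_via_loeve_isometry
    {d : ℕ} {Dset : Set (EuclideanSpace ℝ (Fin d))} (hD : IsCompact Dset)
    {Ω : Type*} [MeasurableSpace Ω] {μ : Measure Ω} [IsProbabilityMeasure μ]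
    {H : Type*} [NormedAddCommGroup H] [InnerProductSpace ℝ H] [CompleteSpace H]
    (k : Dset → Dset → ℝ) (hkcont : Continuous fun p : Dset × Dset => k p.1 p.2)
    (Z TZ : Dset → Lp ℝ 2 μ) (hk : ∀ x x', k x x' = ⟪Z x, Z x'⟫)
    (hTZ : ∀ x, TZ x ∈ closure (Submodule.span ℝ (Set.range Z) : Set (Lp ℝ 2 μ)))
    (φ : Dset → H) (hφ : ∀ x x', ⟪φ x, φ x'⟫ = k x x')
    (hdense : Dense (Submodule.span ℝ (Set.range φ) : Set H))
    (Ψ : H →ₗᵢ[ℝ] Lp ℝ 2 μ) (hΨ : ∀ x, Ψ (φ x) = Z x)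
    (𝒯 : H →ₗ[ℝ] (Dset → ℝ)) (h𝒯 : ∀ h x, 𝒯 h x = ⟪TZ x, Ψ h⟫) :
    ((∀ x, TZ x = Z x) ↔ (∀ x', 𝒯 (φ x') = fun x => k x x')) ∧
    ((∀ x', 𝒯 (φ x') = fun x => k x x') ↔ (∀ h x, 𝒯 h x = ⟪h, φ x⟫)) := by
  constructor
  · constructor
    · intro hinv x'
      funext x
      rw [h𝒯, hΨ, hinv x]
      exact (hk x x').symm
    · intro hfix x
      -- show TZ x - Z x = 0
      have key : ∀ x', ⟪Z x', TZ x - Z x⟫ = 0 := by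
        intro x'
        have h1 : ⟪TZ x, Z x'⟫ = k x x' := by
          have := congrFun (hfix x') x
          rwa [h𝒯, hΨ] at this
        rw [inner_sub_right, real_inner_comm, h1, hk, real_inner_comm, sub_self]
      have hmem : TZ x - Z x ∈
          (Submodule.span ℝ (Set.range Z)).topologicalClosure := by
        refine Submodule.sub_mem _ ?_
          (Submodule.le_topologicalClosure _ (Submodule.subset_span ⟨x, rfl⟩))
        rw [← SetLike.mem_coe, Submodule.topologicalClosure_coe]
        exact hTZ x
      have horth : TZ x - Z x ∈ (ℝ ∙ (TZ x - Z x))ᗮ := by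
        have hle : Submodule.span ℝ (Set.range Z) ≤ (ℝ ∙ (TZ x - Z x))ᗮ := by
          rw [Submodule.span_le]
          rintro _ ⟨x', rfl⟩
          rw [SetLike.mem_coe, Submodule.mem_orthogonal_singleton_iff_inner_right]
          rw [real_inner_comm]
          exact key x'
        have hle' : (Submodule.span ℝ (Set.range Z)).topologicalClosure ≤
            (ℝ ∙ (TZ x - Z x))ᗮ :=
          Submodule.topologicalClosure_minimal _ hle (Submodule.isClosed_orthogonal _)
        exact hle' hmem
      have hz : TZ x - Z x = 0 := by
        have := horth (TZ x - Z x) (Submodule.mem_span_singleton_self _)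
        rwa [inner_self_eq_zero] at this
      exact sub_eq_zero.mp hz
  · constructor
    · intro hfix h x
      -- continuous linear maps agreeing on a dense span
      let f : H →L[ℝ] ℝ := (innerSL ℝ (TZ x)).comp Ψ.toContinuousLinearMap
      let g : H →L[ℝ] ℝ := innerSL ℝ (φ x)
      have hrange : Set.EqOn f g (Set.range φ) := by
        rintro _ ⟨x', rfl⟩
        have h1 : f (φ x') = k x x' := by
          simp only [f, ContinuousLinearMap.comp_apply, innerSL_apply_apply,
            LinearIsometry.coe_toContinuousLinearMap]
          have := congrFun (hfix x') x
          rwa [h𝒯] at this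
        have h2 : g (φ x') = k x x' := by
          simpa [g] using hφ x x'
        simp [h1, h2]
      have hspan : Set.EqOn f g (Submodule.span ℝ (Set.range φ) : Set H) := by
        intro y hy
        induction hy using Submodule.span_induction with
        | mem z hz => exact hrange hz
        | zero => simp
        | add a b _ _ ha hb => simp [map_add, ha, hb]
        | smul c a _ ha => simp [ContinuousLinearMap.map_smul, ha]
      have hfg : ⇑f = ⇑g := Continuous.ext_on hdense f.continuous g.continuous hspan
      rw [h𝒯]
      calc ⟪TZ x, Ψ h⟫ = f h := by
            simp [f, ContinuousLinearMap.comp_apply]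
        _ = g h := congrFun hfg h
        _ = ⟪h, φ x⟫ := by simp [g, real_inner_comm]
    · intro hid x'
      funext x
      rw [hid (φ x') x, hφ, hk, hk, real_inner_comm]
end

section
/- Given a kernel k and a probability measure ν with ∫√(k(u,u))dν(u) < ∞, the function k₀(x,y) = k(x,y) − ∫k(x,u)dν(u) − ∫k(y,u)dν(u) + ∬k(u,v)dν(u)dν(v) is a positive semi-definite kernel and satisfies ∫ k₀(x,u) dν(u) = 0 for every x. -/
open MeasureTheory

lemma mp_eval {D : Type*} [MeasurableSpace D] (ν : Measure D) [IsProbabilityMeasure ν]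
    {n : ℕ} (i : Fin n) :
    MeasurePreserving (fun x : Fin n → D => x i) (Measure.pi fun _ => ν) ν := by
  classical
  refine ⟨measurable_pi_apply i, ?_⟩
  ext s hs
  rw [Measure.map_apply (measurable_pi_apply i) hs]
  have hpre : (fun x : Fin n → D => x i) ⁻¹' s
      = Set.pi Set.univ (fun l => if l = i then s else Set.univ) := by
    ext x
    simp only [Set.mem_preimage, Set.mem_pi, Set.mem_univ, true_implies]
    constructor
    · intro hx l
      by_cases h : l = i <;> simp [h, hx]
    · intro hx
      have := hx i
      simpa using this
  rw [hpre, Measure.pi_pi]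
  have : ∀ l : Fin n, ν (if l = i then s else Set.univ) = (if l = i then ν s else 1) := by
    intro l; by_cases h : l = i <;> simp [h]
  rw [Finset.prod_congr rfl (fun l _ => this l), Finset.prod_ite_eq']
  simp

lemma mp_pair {D : Type*} [MeasurableSpace D] (ν : Measure D) [IsProbabilityMeasure ν]
    {n : ℕ} (i j : Fin n) (hij : i ≠ j) :
    MeasurePreserving (fun x : Fin n → D => (x i, x j)) (Measure.pi fun _ => ν) (ν.prod ν) := by
  classical
  refine ⟨(measurable_pi_apply i).prodMk (measurable_pi_apply j), ?_⟩
  refine (Measure.prod_eq (fun s t hs ht => ?_)).symm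
  rw [Measure.map_apply ((measurable_pi_apply i).prodMk (measurable_pi_apply j)) (hs.prod ht)]
  have hpre : (fun x : Fin n → D => (x i, x j)) ⁻¹' (s ×ˢ t)
      = Set.pi Set.univ (fun l => (if l = i then s else Set.univ) ∩ (if l = j then t else Set.univ)) := by
    ext x
    simp only [Set.mem_preimage, Set.mem_prod, Set.mem_pi, Set.mem_univ, true_implies,
      Set.mem_inter_iff]
    constructor
    · intro hx l
      constructor
      · by_cases h : l = i <;> simp [h, hx.1]
      · by_cases h : l = j <;> simp [h, hx.2]
    · intro hx
      refine ⟨?_, ?_⟩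
      · have := (hx i).1; simpa using this
      · have := (hx j).2; simpa using this
  rw [hpre, Measure.pi_pi]
  have key : ∀ l : Fin n,
      ν ((if l = i then s else Set.univ) ∩ (if l = j then t else Set.univ))
      = (if l = i then ν s else 1) * (if l = j then ν t else 1) := by
    intro l
    by_cases h1 : l = i <;> by_cases h2 : l = j
    · exact absurd (h1.symm.trans h2) hij
    · subst h1; simp [hij, hij.symm]
    · subst h2; simp [hij, Ne.symm hij]
    · simp [h1, h2]
  rw [Finset.prod_congr rfl (fun l _ => key l), Finset.prod_mul_distrib,
    Finset.prod_ite_eq', Finset.prod_ite_eq']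
  simp

lemma mp_integrable_comp {α β : Type*} [MeasurableSpace α] [MeasurableSpace β]
    {μ : Measure α} {ν : Measure β} {f : α → β}
    (hmp : MeasurePreserving f μ ν) {g : β → ℝ} (hg : Integrable g ν) :
    Integrable (fun x => g (f x)) μ := by
  rw [← hmp.map_eq] at hg
  exact (integrable_map_measure hg.aestronglyMeasurable hmp.measurable.aemeasurable).mp hg

lemma mp_integral_comp {α β : Type*} [MeasurableSpace α] [MeasurableSpace β]
    {μ : Measure α} {ν : Measure β} {f : α → β}
    (hmp : MeasurePreserving f μ ν) {g : β → ℝ} (hg : AEStronglyMeasurable g ν) :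
    ∫ x, g (f x) ∂μ = ∫ y, g y ∂ν := by
  rw [← hmp.map_eq] at hg
  rw [← integral_map hmp.measurable.aemeasurable hg, hmp.map_eq]

lemma mul_double_sum {m : ℕ} {p : ℕ} (r : ℝ) (f : Fin m → Fin p → ℝ) :
    r * ∑ a, ∑ b, f a b = ∑ a, ∑ b, r * f a b := by
  rw [Finset.mul_sum]
  exact Finset.sum_congr rfl fun a _ => Finset.mul_sum _ _ _

lemma expand_quad {m : ℕ} (d : Fin m → ℝ) (K : Fin m → Fin m → ℝ) (φ : Fin m → ℝ) (C : ℝ) :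
    ∑ a, ∑ b, d a * d b * (K a b - φ a - φ b + C)
      = (∑ a, ∑ b, d a * d b * K a b) - (∑ a, d a * φ a) * (∑ a, d a)
        - (∑ a, d a) * (∑ a, d a * φ a) + (∑ a, d a) * (∑ a, d a) * C := by
  have inner : ∀ a, ∑ b, d a * d b * (K a b - φ a - φ b + C)
      = (∑ b, d a * d b * K a b) - (d a * φ a) * (∑ b, d b)
        - d a * (∑ b, d b * φ b) + (d a * C) * (∑ b, d b) := by
    intro a
    have e1 : ∑ b, d a * d b * (K a b - φ a - φ b + C)
        = ∑ b, (d a * d b * K a b - (d a * φ a) * d b - d a * (d b * φ b) + (d a * C) * d b) :=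
      Finset.sum_congr rfl fun b _ => by ring
    rw [e1, Finset.sum_add_distrib, Finset.sum_sub_distrib, Finset.sum_sub_distrib,
      ← Finset.mul_sum, ← Finset.mul_sum, ← Finset.mul_sum]
  rw [Finset.sum_congr rfl fun a _ => inner a, Finset.sum_add_distrib,
    Finset.sum_sub_distrib, Finset.sum_sub_distrib, ← Finset.sum_mul, ← Finset.sum_mul,
    ← Finset.sum_mul]
  have : (∑ a, d a * C) = (∑ a, d a) * C := by rw [Finset.sum_mul]
  rw [this]
  ring


section
variable {D : Type*} [MeasurableSpace D] (ν : Measure D) [IsProbabilityMeasure ν]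

lemma key_psd_integral (g : D → D → ℝ)
    (hpsd : ∀ (n : ℕ) (c : Fin n → ℝ) (x : Fin n → D),
      0 ≤ ∑ i, ∑ j, c i * c j * g (x i) (x j))
    (hint2 : Integrable (fun p : D × D => g p.1 p.2) (ν.prod ν))
    (q : D → ℝ) (hq : Measurable q)
    (hdiag : ∀ᵐ u ∂ν, g u u = q u) :
    0 ≤ ∫ p : D × D, g p.1 p.2 ∂(ν.prod ν) := by
  classical
  have hgdiag : ∀ u, 0 ≤ g u u := by
    intro u
    have := hpsd 1 (fun _ => 1) (fun _ => u)
    simpa using this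
  have hq0 : ∀ᵐ u ∂ν, 0 ≤ q u := hdiag.mono fun u hu => hu ▸ hgdiag u
  set A : ℕ → Set D := fun M => q ⁻¹' Set.Iic (M : ℝ) with hA_def
  have hA : ∀ M, MeasurableSet (A M) := fun M => hq measurableSet_Iic
  set G : D × D → ℝ := fun p => g p.1 p.2 with hG_def
  set F : ℕ → D × D → ℝ := fun M => ((A M) ×ˢ (A M)).indicator G with hF_def
  have hFint : ∀ M, Integrable (F M) (ν.prod ν) :=
    fun M => hint2.indicator ((hA M).prod (hA M))
  -- step 1 : each truncated double integral is nonneg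
  have hstep : ∀ M : ℕ, 0 ≤ ∫ p : D × D, F M p ∂(ν.prod ν) := by
    intro M
    set ind : D → ℝ := (A M).indicator 1 with hind_def
    have hind_mul : ∀ u v : D, ind u * ind v * g u v = F M (u, v) := by
      intro u v
      by_cases hu : u ∈ A M <;> by_cases hv : v ∈ A M <;>
        simp [hind_def, hF_def, Set.indicator, hu, hv, hG_def]
    set qA : D → ℝ := (A M).indicator q with hqA_def
    have hqA_meas : Measurable qA := hq.indicator (hA M)
    have hqA_int : Integrable qA ν := by
      refine (integrable_const (M : ℝ)).mono' hqA_meas.aestronglyMeasurable ?_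
      filter_upwards [hq0] with u hu
      by_cases h : u ∈ A M
      · have : q u ≤ (M : ℝ) := h
        simp [hqA_def, Set.indicator_of_mem h, abs_of_nonneg hu, this]
      · simp [hqA_def, Set.indicator_of_notMem h, Nat.cast_nonneg]
    set a : ℝ := ∫ u, qA u ∂ν with ha_def
    set b : ℝ := ∫ p : D × D, F M p ∂(ν.prod ν) with hb_def
    have ha0 : 0 ≤ a := by
      refine integral_nonneg_of_ae ?_
      filter_upwards [hq0] with u hu
      by_cases h : u ∈ A M <;> simp [hqA_def, Set.indicator, h, hu]
    -- diagonal one-variable function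
    set r : D → ℝ := fun u => ind u * ind u * g u u with hr_def
    have hr_ae : r =ᵐ[ν] qA := by
      filter_upwards [hdiag] with u hu
      by_cases h : u ∈ A M <;> simp [hr_def, hind_def, hqA_def, Set.indicator, h, hu]
    have hr_int : Integrable r ν := hqA_int.congr hr_ae.symm
    have hr_val : ∫ u, r u ∂ν = a := integral_congr_ae hr_ae
    -- main n-point inequality
    have claim : ∀ n : ℕ, 0 ≤ (n : ℝ) * a + (n : ℝ) * ((n : ℝ) - 1) * b := by
      intro n
      set π : Measure (Fin n → D) := Measure.pi (fun _ => ν) with hπ_def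
      set T : Fin n → Fin n → (Fin n → D) → ℝ :=
        fun i j x => ind (x i) * ind (x j) * g (x i) (x j) with hT_def
      have hTint : ∀ i j, Integrable (T i j) π := by
        intro i j
        by_cases hij : i = j
        · subst hij
          exact mp_integrable_comp (mp_eval ν i) hr_int
        · have := mp_integrable_comp (mp_pair ν i j hij) (hFint M)
          refine this.congr (Filter.Eventually.of_forall (fun x => ?_))
          exact (hind_mul (x i) (x j)).symm
      have hTval : ∀ i j, ∫ x, T i j x ∂π = if i = j then a else b := by
        intro i j
        by_cases hij : i = j
        · subst hij
          rw [if_pos rfl, ← hr_val]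
          exact mp_integral_comp (mp_eval ν i) hr_int.aestronglyMeasurable
        · rw [if_neg hij]
          have h1 : ∫ x, T i j x ∂π
              = ∫ x, F M ((x i, x j)) ∂π := by
            refine integral_congr_ae (Filter.Eventually.of_forall fun x => ?_)
            exact hind_mul (x i) (x j)
          rw [h1]
          exact mp_integral_comp (mp_pair ν i j hij) (hFint M).aestronglyMeasurable
      have hΦ : 0 ≤ ∫ x, (∑ i, ∑ j, T i j x) ∂π := by
        refine integral_nonneg fun x => ?_
        exact hpsd n (fun i => ind (x i)) x
      have hsplit : ∫ x, (∑ i, ∑ j, T i j x) ∂π = ∑ i, ∑ j, ∫ x, T i j x ∂π := by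
        rw [integral_finset_sum _ (fun i _ => integrable_finset_sum _ (fun j _ => hTint i j))]
        exact Finset.sum_congr rfl fun i _ => integral_finset_sum _ (fun j _ => hTint i j)
      have hval : ∑ i, ∑ j, ∫ x, T i j x ∂π = (n:ℝ) * a + (n:ℝ) * ((n:ℝ) - 1) * b := by
        have : ∀ i : Fin n, ∑ j, ∫ x, T i j x ∂π = a + ((n:ℝ) - 1) * b := by
          intro i
          have : ∑ j, ∫ x, T i j x ∂π = ∑ j, (if i = j then a else b) :=
            Finset.sum_congr rfl fun j _ => hTval i j
          rw [this]
          have : ∑ j : Fin n, (if i = j then a else b)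
              = ∑ j : Fin n, (b + (if i = j then a - b else 0)) := by
            refine Finset.sum_congr rfl fun j _ => ?_
            by_cases h : i = j <;> simp [h]
          rw [this, Finset.sum_add_distrib, Finset.sum_ite_eq, Finset.sum_const,
            Finset.card_univ, Fintype.card_fin]
          simp only [Finset.mem_univ, if_pos, nsmul_eq_mul]
          ring
        rw [Finset.sum_congr rfl fun i _ => this i, Finset.sum_const,
          Finset.card_univ, Fintype.card_fin, nsmul_eq_mul]
        ring
      rw [hsplit, hval] at hΦ
      exact hΦ
    -- archimedean step
    by_contra hb
    push_neg at hb
    obtain ⟨N, hN⟩ := exists_nat_gt (a / (-b))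
    have h1 := claim (N + 2)
    have hbneg : b < 0 := hb
    have hdiv : a / (-b) < (N : ℝ) := hN
    have ha' : a < (N : ℝ) * (-b) := by
      rwa [div_lt_iff₀ (by linarith)] at hdiv
    push_cast at h1
    nlinarith [h1, ha', hbneg, ha0, Nat.cast_nonneg (α := ℝ) N]
  -- step 2: pass to the limit M → ∞
  have htend : Filter.Tendsto (fun M : ℕ => ∫ p : D × D, F M p ∂(ν.prod ν))
      Filter.atTop (nhds (∫ p : D × D, g p.1 p.2 ∂(ν.prod ν))) := by
    refine tendsto_integral_of_dominated_convergence (fun p => ‖G p‖)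
      (fun M => (hFint M).aestronglyMeasurable) hint2.norm ?_ ?_
    · intro M
      refine Filter.Eventually.of_forall fun p => ?_
      exact norm_indicator_le_norm_self G p
    · refine Filter.Eventually.of_forall fun p => ?_
      have : ∀ᶠ M : ℕ in Filter.atTop, F M p = G p := by
        obtain ⟨N, hN⟩ := exists_nat_ge (max (q p.1) (q p.2))
        refine Filter.eventually_atTop.2 ⟨N, fun M hM => ?_⟩
        have hp1 : p.1 ∈ A M := by
          simp only [hA_def, Set.mem_preimage, Set.mem_Iic]
          calc q p.1 ≤ (N : ℝ) := le_trans (le_max_left _ _) hN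
          _ ≤ (M : ℝ) := by exact_mod_cast hM
        have hp2 : p.2 ∈ A M := by
          simp only [hA_def, Set.mem_preimage, Set.mem_Iic]
          calc q p.2 ≤ (N : ℝ) := le_trans (le_max_right _ _) hN
          _ ≤ (M : ℝ) := by exact_mod_cast hM
        simp [hF_def, Set.indicator_of_mem (Set.mk_mem_prod hp1 hp2)]
      exact Filter.Tendsto.congr' (this.mono fun M h => h.symm) tendsto_const_nhds
  exact ge_of_tendsto htend (Filter.Eventually.of_forall hstep)

end

theorem centred_kernel_k0_psd_and_nu_centred
    {D : Type*} [MeasurableSpace D] (ν : Measure D) [IsProbabilityMeasure ν]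
    (k : D → D → ℝ) (hsymm : ∀ x y, k x y = k y x)
    (hpsd : ∀ (n : ℕ) (c : Fin n → ℝ) (x : Fin n → D),
      0 ≤ ∑ i, ∑ j, c i * c j * k (x i) (x j))
    (hmom : Integrable (fun u => Real.sqrt (k u u)) ν)
    (hint : ∀ x, Integrable (fun u => k x u) ν)
    (hint2 : Integrable (fun p : D × D => k p.1 p.2) (ν.prod ν))
    (k₀ : D → D → ℝ)
    (hk₀ : ∀ x y, k₀ x y = k x y - (∫ u, k x u ∂ν) - (∫ u, k y u ∂ν)
        + ∫ p : D × D, k p.1 p.2 ∂(ν.prod ν)) :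
    (∀ (n : ℕ) (c : Fin n → ℝ) (x : Fin n → D),
        0 ≤ ∑ i, ∑ j, c i * c j * k₀ (x i) (x j)) ∧
    (∀ x, ∫ u, k₀ x u ∂ν = 0) := by
  classical
  set C : ℝ := ∫ p : D × D, k p.1 p.2 ∂(ν.prod ν) with hC
  set f : D → ℝ := fun y => ∫ u, k y u ∂ν with hf
  have hk₀' : ∀ a b, k₀ a b = k a b - f a - f b + C := fun a b => hk₀ a b
  have hfint : Integrable f ν := hint2.integral_prod_left
  have hCiter : ∫ y, f y ∂ν = C := integral_integral hint2
  have hkdiagnn : ∀ u, 0 ≤ k u u := fun u => by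
    have := hpsd 1 (fun _ => 1) (fun _ => u); simpa using this
  constructor
  · -- PSD part
    intro n c x
    set S : ℝ := ∑ i, c i with hS
    set A : ℝ := ∑ i, ∑ j, c i * c j * k (x i) (x j) with hA
    set F : D → ℝ := fun u => ∑ i, c i * k (x i) u with hF
    set B : ℝ := ∑ i, c i * f (x i) with hB
    have hFint : Integrable F ν :=
      integrable_finset_sum _ fun i _ => (hint (x i)).const_mul (c i)
    have hFB : ∫ u, F u ∂ν = B := by
      rw [show (∫ u, F u ∂ν) = ∑ i, ∫ u, c i * k (x i) u ∂ν from
        integral_finset_sum _ fun i _ => (hint (x i)).const_mul (c i)]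
      exact Finset.sum_congr rfl fun i _ => by rw [integral_const_mul]
    set g : D → D → ℝ := fun u v => A - S * F u - S * F v + S * S * k u v with hg
    -- finite PSD of g
    have hgpsd : ∀ (m : ℕ) (d : Fin m → ℝ) (u : Fin m → D),
        0 ≤ ∑ a, ∑ b, d a * d b * g (u a) (u b) := by
      intro m d u
      set T : ℝ := ∑ a, d a with hT
      set P : ℝ := ∑ a, d a * F (u a) with hP
      set Q : ℝ := ∑ a, ∑ b, d a * d b * k (u a) (u b) with hQ
      set R : ℝ := ∑ i, ∑ a, (c i * d a) * k (x i) (u a) with hR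
      have hPR : S * P = S * R := by
        have e1 : ∀ a, d a * F (u a) = ∑ i, (c i * d a) * k (x i) (u a) := by
          intro a
          simp only [hF, Finset.mul_sum]
          exact Finset.sum_congr rfl fun i _ => by ring
        rw [hP, hR, Finset.sum_congr rfl fun a _ => e1 a, Finset.sum_comm]
      have hgoal : ∑ a, ∑ b, d a * d b * g (u a) (u b)
          = (S*S)*Q - (S*P)*T - T*(S*P) + T*T*A := by
        have e2 : ∑ a, ∑ b, d a * d b * g (u a) (u b)
            = ∑ a, ∑ b, d a * d b * ((S*S*k (u a) (u b)) - (S * F (u a)) - (S * F (u b)) + A) := by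
          refine Finset.sum_congr rfl fun a _ => Finset.sum_congr rfl fun b _ => ?_
          simp only [hg]; ring
        rw [e2, expand_quad d (fun a b => S*S*k (u a) (u b)) (fun a => S * F (u a)) A]
        have e3 : ∑ a, ∑ b, d a * d b * (S*S*k (u a) (u b)) = (S*S)*Q := by
          rw [hQ, mul_double_sum]
          exact Finset.sum_congr rfl fun a _ => Finset.sum_congr rfl fun b _ => by ring
        have e4 : ∑ a, d a * (S * F (u a)) = S * P := by
          rw [hP, Finset.mul_sum]
          exact Finset.sum_congr rfl fun a _ => by ring
        rw [e3, e4]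
      have H := hpsd (n + m) (Fin.append (fun i => T * c i) (fun a => -(S * d a)))
        (Fin.append x u)
      simp only [Fin.sum_univ_add, Fin.append_left, Fin.append_right,
        Finset.sum_add_distrib] at H
      have e11 : (∑ i : Fin n, ∑ j : Fin n, T * c i * (T * c j) * k (x i) (x j)) = T*T*A := by
        rw [hA, mul_double_sum]
        exact Finset.sum_congr rfl fun i _ => Finset.sum_congr rfl fun j _ => by ring
      have e21 : (∑ a : Fin m, ∑ i : Fin n, -(S * d a) * (T * c i) * k (u a) (x i))
          = (-(S*T))*R := by
        rw [Finset.sum_comm, hR, mul_double_sum]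
        exact Finset.sum_congr rfl fun i _ => Finset.sum_congr rfl fun a _ => by
          rw [hsymm (u a) (x i)]; ring
      have e12 : (∑ i : Fin n, ∑ a : Fin m, T * c i * -(S * d a) * k (x i) (u a))
          = (-(T*S))*R := by
        rw [hR, mul_double_sum]
        exact Finset.sum_congr rfl fun i _ => Finset.sum_congr rfl fun a _ => by ring
      have e22 : (∑ a : Fin m, ∑ b : Fin m, -(S * d a) * -(S * d b) * k (u a) (u b))
          = (S*S)*Q := by
        rw [hQ, mul_double_sum]
        exact Finset.sum_congr rfl fun a _ => Finset.sum_congr rfl fun b _ => by ring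
      rw [e11, e21, e12, e22] at H
      have h3 : (S*P)*T = (S*R)*T := by rw [hPR]
      have h4 : T*(S*P) = T*(S*R) := by rw [hPR]
      rw [hgoal, h3, h4]
      ring_nf at H ⊢
      linarith [H]
    -- integrability and value of the double integral of g
    have mpfst : MeasurePreserving (Prod.fst : D × D → D) (ν.prod ν) ν :=
      ⟨measurable_fst, by simp⟩
    have mpsnd : MeasurePreserving (Prod.snd : D × D → D) (ν.prod ν) ν :=
      ⟨measurable_snd, by simp⟩
    have hF1 : Integrable (fun p : D × D => F p.1) (ν.prod ν) := mp_integrable_comp mpfst hFint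
    have hF2 : Integrable (fun p : D × D => F p.2) (ν.prod ν) := mp_integrable_comp mpsnd hFint
    have hgint : Integrable (fun p : D × D => g p.1 p.2) (ν.prod ν) := by
      have : Integrable (fun p : D × D =>
          A - S * F p.1 - S * F p.2 + S * S * k p.1 p.2) (ν.prod ν) :=
        (((integrable_const A).sub (hF1.const_mul S)).sub (hF2.const_mul S)).add
          (hint2.const_mul (S*S))
      exact this.congr (Filter.Eventually.of_forall fun p => by simp only [hg])
    have hgval : ∫ p : D × D, g p.1 p.2 ∂(ν.prod ν) = A - S*B - S*B + S*S*C := by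
      have e0 : ∫ p : D × D, g p.1 p.2 ∂(ν.prod ν)
          = ∫ p : D × D, (A - S * F p.1 - S * F p.2 + S * S * k p.1 p.2) ∂(ν.prod ν) :=
        integral_congr_ae (Filter.Eventually.of_forall fun p => by simp only [hg])
      have i1 : Integrable (fun p : D × D => S * F p.1) (ν.prod ν) := hF1.const_mul S
      have i2 : Integrable (fun p : D × D => S * F p.2) (ν.prod ν) := hF2.const_mul S
      have i3 : Integrable (fun p : D × D => S * S * k p.1 p.2) (ν.prod ν) :=
        hint2.const_mul (S*S)
      have i4 : Integrable (fun p : D × D => A - S * F p.1) (ν.prod ν) :=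
        (integrable_const A).sub i1
      have i5 : Integrable (fun p : D × D => A - S * F p.1 - S * F p.2) (ν.prod ν) := i4.sub i2
      rw [e0, integral_add i5 i3, integral_sub i4 i2, integral_sub (integrable_const A) i1,
        integral_const, integral_const_mul, integral_const_mul, integral_const_mul,
        mp_integral_comp mpfst hFint.aestronglyMeasurable,
        mp_integral_comp mpsnd hFint.aestronglyMeasurable, hFB]
      simp [hC]
    -- measurable version of the diagonal
    obtain ⟨f₀, hf₀m, hf₀e⟩ := hmom.1
    obtain ⟨F₀, hF₀m, hF₀e⟩ := hFint.1
    set q : D → ℝ := fun v => A - S * F₀ v - S * F₀ v + S * S * (f₀ v * f₀ v) with hq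
    have hqmeas : Measurable q := by
      have h1 : Measurable F₀ := hF₀m.measurable
      have h2 : Measurable f₀ := hf₀m.measurable
      exact ((measurable_const.sub ((h1.const_mul S))).sub (h1.const_mul S)).add
        ((h2.mul h2).const_mul (S*S))
    have hdiagae : ∀ᵐ v ∂ν, g v v = q v := by
      filter_upwards [hf₀e, hF₀e] with v h1 h2
      have hk : k v v = f₀ v * f₀ v := by
        rw [← h1]; exact (Real.mul_self_sqrt (hkdiagnn v)).symm
      simp only [hg, hq, ← h2, hk]
    have hkey := key_psd_integral ν g hgpsd hgint q hqmeas hdiagae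
    rw [hgval] at hkey
    have hsum : ∑ i, ∑ j, c i * c j * k₀ (x i) (x j)
        = A - B*S - S*B + S*S*C := by
      have e : ∑ i, ∑ j, c i * c j * k₀ (x i) (x j)
          = ∑ i, ∑ j, c i * c j * (k (x i) (x j) - f (x i) - f (x j) + C) :=
        Finset.sum_congr rfl fun i _ => Finset.sum_congr rfl fun j _ => by rw [hk₀' (x i) (x j)]
      rw [e, expand_quad c (fun i j => k (x i) (x j)) (fun i => f (x i)) C, ← hA, ← hB, ← hS]
    rw [hsum]
    linarith [hkey]
  · -- centred part
    intro x
    have h1 : Integrable (fun u => k x u - f x) ν := (hint x).sub (integrable_const _)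
    have h2 : Integrable (fun u => k x u - f x - f u) ν := h1.sub hfint
    have e : ∫ u, k₀ x u ∂ν = ∫ u, (k x u - f x - f u + C) ∂ν :=
      integral_congr_ae (Filter.Eventually.of_forall fun u => hk₀' x u)
    rw [e, integral_add h2 (integrable_const _), integral_sub h1 hfint,
      integral_sub (hint x) (integrable_const _), integral_const, integral_const,
      hCiter]
    simp
    exact sub_eq_zero.mpr rfl
end

section
/- The kernel k_harm(x,y) = exp((x₁y₁ + x₂y₂)/θ²) · cos((x₂y₁ − x₁y₂)/θ²) on ℝ² × ℝ² is argumentwise harmonic: for every fixed y ∈ ℝ², the function x ↦ k_harm(x,y) satisfies Δ_x k_harm(x, y) = ∂²/∂x₁² k_harm + ∂²/∂x₂² k_harm = 0. -/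
lemma deriv_ecs (a b c d P Q : ℝ) :
    deriv (fun t => Real.exp (a*t+b) * (P * Real.cos (c*t+d) + Q * Real.sin (c*t+d))) =
    fun t => Real.exp (a*t+b) *
      ((a*P + c*Q) * Real.cos (c*t+d) + (a*Q - c*P) * Real.sin (c*t+d)) := by
  funext t
  have h1 : HasDerivAt (fun t : ℝ => a*t+b) a t := by
    simpa using ((hasDerivAt_id t).const_mul a).add_const b
  have h2 : HasDerivAt (fun t : ℝ => c*t+d) c t := by
    simpa using ((hasDerivAt_id t).const_mul c).add_const d
  have h := h1.exp.mul ((h2.cos.const_mul P).add (h2.sin.const_mul Q))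
  rw [(show HasDerivAt (fun t => Real.exp (a*t+b) * (P * Real.cos (c*t+d) + Q * Real.sin (c*t+d))) _ t from h).deriv]
  simp only [Pi.add_apply]
  ring

lemma key (a b c d : ℝ) :
    deriv (deriv (fun t => Real.exp (a*t+b) * Real.cos (c*t+d))) =
    fun t => Real.exp (a*t+b) *
      ((a^2 - c^2) * Real.cos (c*t+d) + (-(2*a*c)) * Real.sin (c*t+d)) := by
  have e : (fun t => Real.exp (a*t+b) * Real.cos (c*t+d))
      = fun t => Real.exp (a*t+b) * (1 * Real.cos (c*t+d) + 0 * Real.sin (c*t+d)) := by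
    funext t; ring
  rw [e, deriv_ecs, deriv_ecs]
  funext t; ring

theorem kharm_is_argumentwise_harmonic
    (θ : ℝ) (hθ : 0 < θ) (kh : ℝ → ℝ → ℝ → ℝ → ℝ)
    (hk : ∀ x₁ x₂ y₁ y₂, kh x₁ x₂ y₁ y₂ =
        Real.exp ((x₁ * y₁ + x₂ * y₂) / θ ^ 2) *
          Real.cos ((x₂ * y₁ - x₁ * y₂) / θ ^ 2)) :
    ∀ x₁ x₂ y₁ y₂,
      deriv (deriv (fun t => kh t x₂ y₁ y₂)) x₁ +
        deriv (deriv (fun t => kh x₁ t y₁ y₂)) x₂ = 0 := by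
  intro x₁ x₂ y₁ y₂
  have e1 : (fun t => kh t x₂ y₁ y₂)
      = fun t => Real.exp ((y₁/θ^2)*t + x₂*y₂/θ^2) *
          Real.cos ((-y₂/θ^2)*t + x₂*y₁/θ^2) := by
    funext t
    rw [hk]
    rw [show (t * y₁ + x₂ * y₂) / θ ^ 2 = (y₁/θ^2)*t + x₂*y₂/θ^2 by ring,
        show (x₂ * y₁ - t * y₂) / θ ^ 2 = (-y₂/θ^2)*t + x₂*y₁/θ^2 by ring]
  have e2 : (fun t => kh x₁ t y₁ y₂)
      = fun t => Real.exp ((y₂/θ^2)*t + x₁*y₁/θ^2) *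
          Real.cos ((y₁/θ^2)*t + (-(x₁*y₂))/θ^2) := by
    funext t
    rw [hk]
    rw [show (x₁ * y₁ + t * y₂) / θ ^ 2 = (y₂/θ^2)*t + x₁*y₁/θ^2 by ring,
        show (t * y₁ - x₁ * y₂) / θ ^ 2 = (y₁/θ^2)*t + (-(x₁*y₂))/θ^2 by ring]
  rw [e1, e2, key, key]
  simp only
  rw [show (y₁/θ^2)*x₁ + x₂*y₂/θ^2 = (x₁*y₁+x₂*y₂)/θ^2 by ring,
      show (y₂/θ^2)*x₂ + x₁*y₁/θ^2 = (x₁*y₁+x₂*y₂)/θ^2 by ring,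
      show (-y₂/θ^2)*x₁ + x₂*y₁/θ^2 = (x₂*y₁-x₁*y₂)/θ^2 by ring,
      show (y₁/θ^2)*x₂ + (-(x₁*y₂))/θ^2 = (x₂*y₁-x₁*y₂)/θ^2 by ring]
  ring
end

section
/- Under the same assumptions, the conditional covariance kernel c(x, x') = k(x, x') − k(x)ᵀ K⁻¹ k(x') of Gaussian process regression is again argumentwise T-invariant: T(c(·, x')) = c(·, x') for every x' ∈ D. -/
theorem gpr_conditional_kernel_is_argumentwise_T_invariant
    {D : Type*} (k : D → D → ℝ) (T : (D → ℝ) →ₗ[ℝ] (D → ℝ))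
    (hinv : ∀ x' : D, T (fun x => k x x') = fun x => k x x')
    (n : ℕ) (X : Fin n → D)
    (K : Matrix (Fin n) (Fin n) ℝ) (hK : ∀ i j, K i j = k (X i) (X j))
    (hKinv : IsUnit K.det)
    (c : D → D → ℝ)
    (hc : ∀ x x', c x x' = k x x' - ∑ i, ∑ j, k x (X i) * K⁻¹ i j * k x' (X j)) :
    ∀ x' : D, T (fun x => c x x') = fun x => c x x' := by
  intro x'
  have hrep : (fun x => c x x') =
      (fun x => k x x') -
        ∑ i : Fin n, (∑ j, K⁻¹ i j * k x' (X j)) • (fun x => k x (X i)) := by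
    funext x
    simp only [Pi.sub_apply, Finset.sum_apply, Pi.smul_apply, smul_eq_mul, hc,
      Finset.sum_mul, Finset.mul_sum]
    congr 1
    apply Finset.sum_congr rfl
    intro i _
    apply Finset.sum_congr rfl
    intro j _
    ring
  rw [hrep, map_sub, map_sum]
  simp only [map_smul, hinv]
end

section
/- Let T = Σ_{i=1}^q α_i T_{v_i} be a combination of composition operators and k a kernel with RKHS H such that T(k(·, x')) = k(·, x') for all x'. Then every function h in the RKHS H satisfies T(h) = h; that is, argumentwise T-invariance of the kernel implies T-invariance of all RKHS elements. -/
open scoped RealInnerProductSpace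

theorem argumentwise_invariant_kernel_implies_invariant_RKHS_elements
    {D : Type*} {H : Type*} [NormedAddCommGroup H] [InnerProductSpace ℝ H]
    (φ : D → H) (hdense : Dense (Submodule.span ℝ (Set.range φ) : Set H))
    (k : D → D → ℝ) (hk : ∀ x x', k x x' = ⟪φ x, φ x'⟫)
    (q : ℕ) (α : Fin q → ℝ) (v : Fin q → D → D)
    (hinv : ∀ x x', ∑ i, α i * k (v i x) x' = k x x') :
    ∀ h : H, (fun x => ∑ i, α i * ⟪h, φ (v i x)⟫) = fun x => ⟪h, φ x⟫ := by
  intro h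
  funext x
  -- define the two continuous linear functionals
  set L1 : H →L[ℝ] ℝ := ∑ i, α i • innerSL ℝ (φ (v i x)) with hL1
  set L2 : H →L[ℝ] ℝ := innerSL ℝ (φ x) with hL2
  have hL1apply : ∀ g : H, L1 g = ∑ i, α i * ⟪φ (v i x), g⟫ := by
    intro g
    simp [hL1, ContinuousLinearMap.sum_apply]
  have hrange : Set.EqOn L1 L2 (Set.range φ) := by
    rintro _ ⟨x', rfl⟩
    have := hinv x x'
    simp only [hk] at this
    simpa [hL1apply, hL2] using this
  have hspan : Set.EqOn (L1 : H → ℝ) (L2 : H → ℝ) (Submodule.span ℝ (Set.range φ) : Set H) := by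
    intro g hg
    exact LinearMap.eqOn_span' hrange hg
  have : L1 = L2 := by
    apply ContinuousLinearMap.coeFn_injective
    exact Continuous.ext_on hdense L1.continuous L2.continuous hspan
  have hx : L1 h = L2 h := by rw [this]
  rw [hL1apply] at hx
  simp only [hL2, innerSL_apply_apply] at hx
  calc (∑ i, α i * ⟪h, φ (v i x)⟫) = ∑ i, α i * ⟪φ (v i x), h⟫ := by
        simp [real_inner_comm]
    _ = ⟪φ x, h⟫ := hx
    _ = ⟪h, φ x⟫ := real_inner_comm _ _
end
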